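/- arXiv:2305.19015 — 2 statements merged into one kernel-verified Lean document; each statement's English description precedes it below -/
import Mathlib

section
/- Let G = (V, A, c) be a finite weighted directed graph with no negative cycles and let B > 0. Then for every s–t path P there exists a simple s–t path P' (a path with no repeated vertices) such that d_B(P') ≤ d_B(P). -/
open scoped Classical

/-- The clamped addition `x ⊕_B y = [x + y]₀ᴮ` on `ℝ ∪ {∞}` (modeled inside `EReal`;
inputs are never `⊥`). -/
noncomputable def eplus (B : ℝ) (x y : EReal) : EReal :=
  if x + y < 0 then 0 else if x + y ≤ (B : EReal) then x + y else ⊤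

/-- `batt B b cst i` is the charge `b_i` of the battery after traversing the first `i`
arcs of a path whose `i`-th arc (0-indexed) has cost `cst i`, starting from charge `b`. -/
noncomputable def batt (B b : ℝ) (cst : ℕ → ℝ) : ℕ → ℝ
  | 0 => b
  | i + 1 => min (batt B b cst i - cst i) B

/-- The path with arc costs `cst 0, …, cst (k-1)` is traversable from initial charge `b`. -/
def Trav (B b : ℝ) (cst : ℕ → ℝ) (k : ℕ) : Prop :=
  ∀ i, i < k → cst i ≤ batt B b cst i

/-- The energetic cost `d_{B,b}(P) = b - b_k` of a path with arc costs
`cst 0, …, cst (k-1)`, or `∞` if not traversable from initial charge `b`. -/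
noncomputable def dE (B b : ℝ) (cst : ℕ → ℝ) (k : ℕ) : EReal :=
  if Trav B b cst k then ((b - batt B b cst k : ℝ) : EReal) else ⊤

/-- `u 0, u 1, …, u k` is a path in the graph with arc relation `Arc`. -/
def IsPath {V : Type*} (Arc : V → V → Prop) (u : ℕ → V) (k : ℕ) : Prop :=
  ∀ i, i < k → Arc (u i) (u (i + 1))

/-- The energetic cost `δ_{B,b}(s,t)`: the minimum of `d_{B,b}(P)` over all `s`–`t`
paths `P` (`∞` if there is none). -/
noncomputable def deltaE {V : Type*} (Arc : V → V → Prop) (c : V → V → ℝ)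
    (B b : ℝ) (s t : V) : EReal :=
  sInf { x : EReal | ∃ (u : ℕ → V) (k : ℕ), IsPath Arc u k ∧ u 0 = s ∧ u k = t ∧
    x = dE B b (fun i => c (u i) (u (i + 1))) k }

/-- The standard distance `δ(s,t)`: the infimum of total costs of `s`–`t` paths. -/
noncomputable def distE {V : Type*} (Arc : V → V → Prop) (c : V → V → ℝ)
    (s t : V) : EReal :=
  sInf { x : EReal | ∃ (u : ℕ → V) (k : ℕ), IsPath Arc u k ∧ u 0 = s ∧ u k = t ∧
    x = ((∑ i ∈ Finset.range k, c (u i) (u (i + 1)) : ℝ) : EReal) }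

/-- The graph has no negative cycles. -/
def NoNegCycles {V : Type*} (Arc : V → V → Prop) (c : V → V → ℝ) : Prop :=
  ∀ (u : ℕ → V) (k : ℕ), IsPath Arc u k → u k = u 0 → 1 ≤ k →
    0 ≤ ∑ i ∈ Finset.range k, c (u i) (u (i + 1))

section Helpers

variable {B b b' : ℝ} {c1 c2 cst : ℕ → ℝ}

lemma batt_congr {n : ℕ} (h : ∀ m < n, c1 m = c2 m) :
    batt B b c1 n = batt B b c2 n := by
  induction n with
  | zero => rfl
  | succ n ih =>
      simp only [batt, ih (fun m hm => h m (Nat.lt_succ_of_lt hm)),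
        h n (Nat.lt_succ_self n)]

lemma batt_mono (hb : b ≤ b') (n : ℕ) : batt B b cst n ≤ batt B b' cst n := by
  induction n with
  | zero => exact hb
  | succ n ih => exact min_le_min (by linarith) le_rfl

lemma batt_le_sub (n : ℕ) : batt B b cst n ≤ b - ∑ m ∈ Finset.range n, cst m := by
  induction n with
  | zero => simp [batt]
  | succ n ih =>
      rw [Finset.sum_range_succ]
      calc batt B b cst (n+1) ≤ batt B b cst n - cst n := min_le_left _ _
        _ ≤ _ := by linarith

lemma batt_add (a n : ℕ) :
    batt B b cst (a + n) = batt B (batt B b cst a) (fun m => cst (a + m)) n := by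
  induction n with
  | zero => rfl
  | succ n ih =>
      show min (batt B b cst (a + n) - cst (a + n)) B
        = min (batt B (batt B b cst a) (fun m => cst (a + m)) n - cst (a + n)) B
      rw [ih]

lemma trav_congr {k : ℕ} (h : ∀ m < k, c1 m = c2 m) :
    Trav B b c1 k ↔ Trav B b c2 k := by
  unfold Trav
  constructor <;> intro hT i hi <;>
    have hb := batt_congr (B := B) (b := b) (c1 := c1) (c2 := c2)
      (n := i) (fun m hm => h m (hm.trans hi)) <;>
    have := hT i hi <;> rw [h i hi] at * <;> linarith

lemma dE_congr {k : ℕ} (h : ∀ m < k, c1 m = c2 m) :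
    dE B b c1 k = dE B b c2 k := by
  unfold dE
  rw [batt_congr h]
  by_cases hT : Trav B b c1 k
  · rw [if_pos hT, if_pos ((trav_congr h).mp hT)]
  · rw [if_neg hT, if_neg (fun h2 => hT ((trav_congr h).mpr h2))]

lemma splice (B : ℝ) (cst : ℕ → ℝ) (i d k : ℕ) (hid : i + d ≤ k)
    (hsum : 0 ≤ ∑ m ∈ Finset.range d, cst (i + m)) :
    dE B B (fun n => if n < i then cst n else cst (n + d)) (k - d) ≤ dE B B cst k := by
  set cst' := fun n => if n < i then cst n else cst (n + d) with hcst'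
  by_cases hT : Trav B B cst k
  swap
  · have h : dE B B cst k = ⊤ := by rw [dE, if_neg hT]
    rw [h]; exact le_top
  set b1 := batt B B cst i with hb1
  set b2 := batt B B cst (i + d) with hb2
  have hagree : ∀ m < i, cst' m = cst m := fun m hm => if_pos hm
  have hb1' : batt B B cst' i = b1 := batt_congr hagree
  have hshift : (fun m => cst' (i + m)) = fun m => cst (i + d + m) := by
    funext m
    simp only [hcst', if_neg (by omega : ¬ i + m < i)]
    congr 1; omega
  have h21 : b2 ≤ b1 := by
    have := batt_le_sub (B := B) (b := b1) (cst := fun m => cst (i + m)) d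
    rw [hb2, batt_add]
    linarith
  have hkey : ∀ n, batt B B cst (i + d + n) ≤ batt B B cst' (i + n) := by
    intro n
    have hL : batt B B cst (i + d + n) = batt B b2 (fun m => cst (i + d + m)) n :=
      batt_add (i + d) n
    have hR : batt B B cst' (i + n) = batt B b1 (fun m => cst (i + d + m)) n := by
      rw [batt_add i n, hb1', hshift]
    rw [hL, hR]
    exact batt_mono h21 n
  have hTrav' : Trav B B cst' (k - d) := by
    intro n hn
    by_cases hni : n < i
    · rw [hagree n hni, batt_congr (fun m hm => hagree m (hm.trans hni))]
      exact hT n (by omega)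
    · have h1 : cst' n = cst (n + d) := if_neg hni
      have h2 : batt B B cst (n + d) ≤ batt B B cst' n := by
        have h3 := hkey (n - i)
        have e1 : i + d + (n - i) = n + d := by omega
        have e2 : i + (n - i) = n := by omega
        rwa [e1, e2] at h3
      rw [h1]
      exact le_trans (hT (n + d) (by omega)) h2
  rw [dE, dE, if_pos hT, if_pos hTrav']
  rw [EReal.coe_le_coe_iff]
  have := hkey (k - d - i)
  have he1 : i + d + (k - d - i) = k := by omega
  have he2 : i + (k - d - i) = k - d := by omega
  rw [he1, he2] at this
  linarith

end Helpers

lemma aux_simple {V : Type*} (Arc : V → V → Prop) (c : V → V → ℝ)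
    (hNC : NoNegCycles Arc c) (B : ℝ) (k : ℕ) :
    ∀ u : ℕ → V, IsPath Arc u k →
      ∃ (u' : ℕ → V) (k' : ℕ), IsPath Arc u' k' ∧ u' 0 = u 0 ∧ u' k' = u k ∧
        (∀ i ≤ k', ∀ j ≤ k', u' i = u' j → i = j) ∧
        dE B B (fun i => c (u' i) (u' (i + 1))) k' ≤
          dE B B (fun i => c (u i) (u (i + 1))) k := by
  induction k using Nat.strong_induction_on with
  | _ k IH =>
    intro u hP
    by_cases hsimp : ∀ i ≤ k, ∀ j ≤ k, u i = u j → i = j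
    · exact ⟨u, k, hP, rfl, rfl, hsimp, le_rfl⟩
    · push_neg at hsimp
      obtain ⟨a, ha, b, hb, hab, hne⟩ := hsimp
      obtain ⟨i, j, hij, hjk, huij⟩ : ∃ i j, i < j ∧ j ≤ k ∧ u i = u j := by
        rcases lt_or_gt_of_ne hne with h | h
        · exact ⟨a, b, h, hb, hab⟩
        · exact ⟨b, a, h, ha, hab.symm⟩
      set d := j - i with hd
      have hd1 : 1 ≤ d := by omega
      have hjd : j = i + d := by omega
      set u' : ℕ → V := fun n => if n < i then u n else u (n + d) with hu'
      have hu'val : ∀ n, i ≤ n → u' n = u (n + d) := fun n hn => if_neg (by omega)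
      have hu'val2 : ∀ n, n ≤ i → u' n = u n := by
        intro n hn
        by_cases h : n < i
        · exact if_pos h
        · have hni : n = i := by omega
          subst hni
          rw [hu'val n le_rfl, ← hjd, ← huij]
      have hP' : IsPath Arc u' (k - d) := by
        intro n hn
        by_cases h : n < i
        · rw [hu'val2 n (by omega), hu'val2 (n+1) (by omega)]
          exact hP n (by omega)
        · rw [hu'val n (by omega), hu'val (n+1) (by omega)]
          have he : n + 1 + d = n + d + 1 := by omega
          rw [he]
          exact hP (n + d) (by omega)
      set cst : ℕ → ℝ := fun n => c (u n) (u (n + 1)) with hcst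
      have hsum : 0 ≤ ∑ m ∈ Finset.range d, cst (i + m) := by
        have := hNC (fun m => u (i + m)) d
          (fun m hm => by
            have he : i + (m + 1) = i + m + 1 := by omega
            simpa [he] using hP (i + m) (by omega))
          (by show u (i + d) = u (i + 0); rw [← hjd, Nat.add_zero]; exact huij.symm)
          hd1
        refine le_trans this (le_of_eq (Finset.sum_congr rfl fun m _ => ?_))
        simp only [hcst, Nat.add_assoc]
      have hspl := splice B cst i d k (by omega) hsum
      have hce : dE B B (fun n => c (u' n) (u' (n + 1))) (k - d)
          = dE B B (fun n => if n < i then cst n else cst (n + d)) (k - d) := by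
        apply dE_congr
        intro m hm
        by_cases h : m < i
        · rw [if_pos h, hu'val2 m (by omega), hu'val2 (m+1) (by omega)]
        · rw [if_neg h, hu'val m (by omega), hu'val (m+1) (by omega)]
          simp only [hcst]
          congr 2
          omega
      obtain ⟨u'', k'', h1, h2, h3, h4, h5⟩ := IH (k - d) (by omega) u' hP'
      refine ⟨u'', k'', h1, ?_, ?_, h4, ?_⟩
      · rw [h2, hu'val2 0 (by omega)]
      · rw [h3, hu'val (k - d) (by omega)]
        congr 1
        omega
      · calc dE B B (fun i => c (u'' i) (u'' (i + 1))) k''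
            ≤ dE B B (fun n => c (u' n) (u' (n + 1))) (k - d) := h5
          _ = _ := hce
          _ ≤ dE B B cst k := hspl

/-- in a finite graph with no negative cycles, for every `s`–`t` path `P`
there is a simple `s`–`t` path `P'` with `d_B(P') ≤ d_B(P)`. -/
theorem exists_simple_path_le {V : Type*} [Fintype V] (Arc : V → V → Prop)
    (c : V → V → ℝ) (hNC : NoNegCycles Arc c) (B : ℝ) (hB : 0 < B) (s t : V)
    (u : ℕ → V) (k : ℕ) (hP : IsPath Arc u k) (hs : u 0 = s) (ht : u k = t) :
    ∃ (u' : ℕ → V) (k' : ℕ), IsPath Arc u' k' ∧ u' 0 = s ∧ u' k' = t ∧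
      (∀ i ≤ k', ∀ j ≤ k', u' i = u' j → i = j) ∧
      dE B B (fun i => c (u' i) (u' (i + 1))) k' ≤
        dE B B (fun i => c (u i) (u (i + 1))) k := by
  obtain ⟨u', k', h1, h2, h3, h4, h5⟩ := aux_simple Arc c hNC B k u hP
  exact ⟨u', k', h1, by rw [h2, hs], by rw [h3, ht], h4, h5⟩
end

section
/- Minimum initial charge of a path (Lemma 3): let P = u₀u₁…u_k be a path with arc costs c_i = c(u_{i−1}u_i) and let B > 0. Define r(P) = c₁ ⊕_B (c₂ ⊕_B (⋯ ⊕_B (c_{k−1} ⊕_B (c_k ⊕_B 0))⋯)) for k > 0 and r(P) = 0 for k = 0; equivalently, writing P' = u₁…u_k, r(P) = c₁ ⊕_B r(P') for k > 0. Then for every b with 0 ≤ b ≤ B, P is traversable from initial charge b if and only if r(P) is finite and b ≥ r(P); consequently the minimum initial charge b_B(P) equals r(P). -/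
open scoped Classical

/-- The right-nested value `r(P) = c₁ ⊕_B (c₂ ⊕_B (⋯ ⊕_B (c_{k−1} ⊕_B (c_k ⊕_B 0))⋯))`
(with `c_i = cst (i-1)`); equivalently `r(P) = c₁ ⊕_B r(P')` where `P'` drops the
first arc, and `r(P) = 0` for `k = 0`. -/
noncomputable def rInit (B : ℝ) : (ℕ → ℝ) → ℕ → EReal
  | _, 0 => 0
  | cst, k + 1 => eplus B ((cst 0 : ℝ) : EReal) (rInit B (fun i => cst (i + 1)) k)

lemma eplus_top (B c : ℝ) : eplus B (c : EReal) ⊤ = ⊤ := by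
  unfold eplus
  rw [EReal.coe_add_top]
  simp

lemma eplus_coe (B c r : ℝ) :
    eplus B (c : EReal) (r : EReal) =
      if c + r < 0 then 0 else if c + r ≤ B then ((c + r : ℝ) : EReal) else ⊤ := by
  unfold eplus
  norm_cast


lemma rInit_cases (B : ℝ) (hB : 0 < B) (cst : ℕ → ℝ) (k : ℕ) :
    rInit B cst k = ⊤ ∨ ∃ r : ℝ, 0 ≤ r ∧ r ≤ B ∧ rInit B cst k = (r : EReal) := by
  induction k generalizing cst with
  | zero => exact Or.inr ⟨0, le_refl _, hB.le, by simp [rInit]⟩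
  | succ k ih =>
    rcases ih (fun i => cst (i + 1)) with h | ⟨r, hr0, hrB, hr⟩
    · left; simp [rInit, h, eplus_top]
    · rw [rInit, hr, eplus_coe]
      by_cases h1 : cst 0 + r < 0
      · exact Or.inr ⟨0, le_refl _, hB.le, by simp [h1]⟩
      · by_cases h2 : cst 0 + r ≤ B
        · exact Or.inr ⟨cst 0 + r, le_of_not_gt h1, h2, by simp [h1, h2]⟩
        · left; simp [h1, h2]

lemma batt_shift (B b : ℝ) (cst : ℕ → ℝ) (i : ℕ) :
    batt B b cst (i + 1) = batt B (min (b - cst 0) B) (fun j => cst (j + 1)) i := by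
  induction i with
  | zero => simp [batt]
  | succ i ih => rw [batt, ih]; rfl

lemma trav_succ (B b : ℝ) (cst : ℕ → ℝ) (k : ℕ) :
    Trav B b cst (k + 1) ↔
      cst 0 ≤ b ∧ Trav B (min (b - cst 0) B) (fun j => cst (j + 1)) k := by
  constructor
  · intro h
    refine ⟨h 0 (Nat.succ_pos k), fun i hi => ?_⟩
    rw [← batt_shift]
    exact h (i + 1) (Nat.succ_lt_succ hi)
  · rintro ⟨h0, h⟩ i hi
    cases i with
    | zero => exact h0
    | succ i => rw [batt_shift]; exact h i (Nat.lt_of_succ_lt_succ hi)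

lemma trav_iff (B : ℝ) (hB : 0 < B) (cst : ℕ → ℝ) (k : ℕ) (b : ℝ) (hb0 : 0 ≤ b)
    (hbB : b ≤ B) :
    Trav B b cst k ↔ rInit B cst k ≠ ⊤ ∧ rInit B cst k ≤ ((b : ℝ) : EReal) := by
  induction k generalizing cst b with
  | zero =>
    simp only [rInit]
    constructor
    · intro _; exact ⟨by simp, by exact_mod_cast hb0⟩
    · intro _ i hi; omega
  | succ k ih =>
    rw [rInit]
    rcases rInit_cases B hB (fun i => cst (i + 1)) k with htop | ⟨r, hr0, hrB, hr⟩
    · rw [htop, eplus_top]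
      simp only [ne_eq, not_true_eq_false, false_and, iff_false]
      intro htrav
      rw [trav_succ] at htrav
      obtain ⟨h0, ht⟩ := htrav
      have hb' : (0:ℝ) ≤ min (b - cst 0) B := le_min (by linarith) hB.le
      have := (ih _ _ hb' (min_le_right _ _)).mp ht
      rw [htop] at this
      exact this.1 rfl
    · rw [hr, eplus_coe]
      have hL : Trav B b cst (k + 1) ↔ (cst 0 ≤ b ∧ r ≤ min (b - cst 0) B) := by
        rw [trav_succ]
        constructor
        · rintro ⟨h0, ht⟩
          have hb' : (0:ℝ) ≤ min (b - cst 0) B := le_min (by linarith) hB.le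
          have h2 := (ih _ _ hb' (min_le_right _ _)).mp ht
          rw [hr] at h2
          exact ⟨h0, by exact_mod_cast h2.2⟩
        · rintro ⟨h0, hle⟩
          have hb' : (0:ℝ) ≤ min (b - cst 0) B := le_min (by linarith) hB.le
          refine ⟨h0, (ih _ _ hb' (min_le_right _ _)).mpr ?_⟩
          rw [hr]
          exact ⟨by simp, by exact_mod_cast hle⟩
      rw [hL]
      by_cases h1 : cst 0 + r < 0
      · rw [if_pos h1]
        have hrhs : ((0 : EReal) ≠ ⊤ ∧ (0 : EReal) ≤ ((b:ℝ):EReal)) := ⟨by simp, by exact_mod_cast hb0⟩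
        exact iff_of_true ⟨by linarith, le_min (by linarith) hrB⟩ hrhs
      · by_cases h2 : cst 0 + r ≤ B
        · rw [if_neg h1, if_pos h2]
          have : (((cst 0 + r : ℝ) : EReal) ≠ ⊤ ∧ ((cst 0 + r : ℝ) : EReal) ≤ ((b:ℝ):EReal)) ↔
              cst 0 + r ≤ b := by
            constructor
            · rintro ⟨_, hle⟩; exact_mod_cast hle
            · intro h; exact ⟨EReal.coe_ne_top _, by exact_mod_cast h⟩
          rw [this]
          constructor
          · rintro ⟨h0, hle⟩
            have := hle.trans (min_le_left _ _)
            linarith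
          · intro hle
            exact ⟨by linarith, le_min (by linarith) hrB⟩
        · rw [if_neg h1, if_neg h2]
          simp only [ne_eq, not_true_eq_false, false_and, iff_false, not_and]
          intro h0 hle
          have := hle.trans (min_le_left _ _)
          exact h2 (by linarith)

/-- Lemma 3: for every `b ∈ [0, B]`, the path `P` is traversable from
initial charge `b` iff `r(P)` is finite and `b ≥ r(P)`; consequently the minimum
initial charge `b_B(P)` equals `r(P)`. -/
theorem min_initial_charge_eq {V : Type*} [Fintype V] (Arc : V → V → Prop)
    (c : V → V → ℝ) (B : ℝ) (hB : 0 < B) (u : ℕ → V) (k : ℕ) (hP : IsPath Arc u k) :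
    (∀ b : ℝ, 0 ≤ b → b ≤ B →
      (Trav B b (fun i => c (u i) (u (i + 1))) k ↔
        rInit B (fun i => c (u i) (u (i + 1))) k ≠ ⊤ ∧
        rInit B (fun i => c (u i) (u (i + 1))) k ≤ ((b : ℝ) : EReal))) ∧
    sInf { x : EReal | ∃ b : ℝ, 0 ≤ b ∧ b ≤ B ∧
        Trav B b (fun i => c (u i) (u (i + 1))) k ∧ x = ((b : ℝ) : EReal) } =
      rInit B (fun i => c (u i) (u (i + 1))) k := by
  constructor
  · intro b hb0 hbB
    exact trav_iff B hB _ k b hb0 hbB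
  · rcases rInit_cases B hB (fun i => c (u i) (u (i + 1))) k with htop | ⟨r, hr0, hrB, hr⟩
    · rw [htop]
      have hempty : { x : EReal | ∃ b : ℝ, 0 ≤ b ∧ b ≤ B ∧
          Trav B b (fun i => c (u i) (u (i + 1))) k ∧ x = ((b : ℝ) : EReal) } = ∅ := by
        ext x
        simp only [Set.mem_setOf_eq, Set.mem_empty_iff_false, iff_false]
        rintro ⟨b, hb0, hbB, ht, rfl⟩
        exact ((trav_iff B hB _ k b hb0 hbB).mp ht).1 htop
      rw [hempty, sInf_empty]
    · rw [hr]
      apply le_antisymm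
      · apply sInf_le
        exact ⟨r, hr0, hrB,
          (trav_iff B hB _ k r hr0 hrB).mpr ⟨by rw [hr]; simp, by rw [hr]⟩, rfl⟩
      · apply le_sInf
        rintro x ⟨b, hb0, hbB, ht, rfl⟩
        have h2 := ((trav_iff B hB _ k b hb0 hbB).mp ht).2
        rwa [hr] at h2
end
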